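/- Let d ≥ 1, let α and β be finite sets with |β| < d, |α| > max(|β|, 4), and set k := |α| + |β| − d, assuming d ≤ k and k ≥ 2. Let L ≤ S_β and let G be a subgroup of S_α × S_β whose second projection equals L and whose first projection equals either A_α or S_α. Let Ĝ be the image of G in S_{α⊕β} under the embedding sending (g, h) to g ⊕ h. Then the Galois closure of Ĝ over k equals {g ⊕ h : g ∈ S_α, h ∈ L}, i.e., the direct product S_α × L. -/

import Mathlib

/-- `σ ⊢ f`: the permutation `σ` leaves the function `f : ({1,…,k}^Ω) → {1,…,k}` invariant. -/
def InvariantUnder {Ω : Type*} (k : ℕ) (σ : Equiv.Perm Ω) (f : (Ω → Fin k) → Fin k) : Prop :=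
  ∀ x : Ω → Fin k, f x = f (fun i => x (σ i))

/-- The Galois closure over `k` of a subgroup `G` of the symmetric group on `Ω`. -/
def galoisClosure {Ω : Type*} (k : ℕ) (G : Subgroup (Equiv.Perm Ω)) : Set (Equiv.Perm Ω) :=
  {σ | ∀ f : (Ω → Fin k) → Fin k, (∀ π ∈ G, InvariantUnder k π f) → InvariantUnder k σ f}

/-- `G` is Galois closed over `k`. -/
def IsGaloisClosed {Ω : Type*} (k : ℕ) (G : Subgroup (Equiv.Perm Ω)) : Prop :=
  galoisClosure k G = (G : Set (Equiv.Perm Ω))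

lemma orbit_of_mem_closure {Ω : Type*} {k : ℕ} (hk2 : 2 ≤ k) {G : Subgroup (Equiv.Perm Ω)}
    {σ : Equiv.Perm Ω} (hσ : σ ∈ galoisClosure k G) (x : Ω → Fin k) :
    ∃ τ ∈ G, ∀ i, x (σ i) = x (τ i) := by
  classical
  set f : (Ω → Fin k) → Fin k :=
    fun y => if ∃ π ∈ G, (fun i => y (π i)) = x then ⟨0, by omega⟩ else ⟨1, by omega⟩ with hf
  have hinv : ∀ π ∈ G, InvariantUnder k π f := by
    intro π₀ hπ₀ y
    have key : (∃ π ∈ G, (fun i => y (π i)) = x)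
        ↔ (∃ π ∈ G, (fun i => y (π₀ (π i))) = x) := by
      constructor
      · rintro ⟨π, hπ, hyx⟩
        refine ⟨π₀⁻¹ * π, mul_mem (inv_mem hπ₀) hπ, funext fun i => ?_⟩
        have := congrFun hyx i
        simpa using this
      · rintro ⟨π, hπ, hyx⟩
        refine ⟨π₀ * π, mul_mem hπ₀ hπ, funext fun i => ?_⟩
        have := congrFun hyx i
        simpa using this
    show (if ∃ π ∈ G, (fun i => y (π i)) = x then _ else _)
        = (if ∃ π ∈ G, (fun i => (fun j => y (π₀ j)) (π i)) = x then _ else _)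
    simp only []
    rw [if_congr key.symm rfl rfl]
  have h0 : f x = ⟨0, by omega⟩ := by
    rw [hf]
    exact if_pos ⟨1, one_mem G, funext fun i => by simp⟩
  have hx := hσ f hinv x
  rw [h0] at hx
  by_cases hc : ∃ π ∈ G, (fun i => x (σ (π i))) = x
  · obtain ⟨π, hπ, hfix⟩ := hc
    refine ⟨π⁻¹, inv_mem hπ, fun i => ?_⟩
    have := congrFun hfix (π⁻¹ i)
    simpa using this
  · have : f (fun i => x (σ i)) = ⟨1, by omega⟩ := by
      rw [hf]; exact if_neg hc
    rw [this] at hx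
    simp at hx

lemma mem_closure_of_orbit {Ω : Type*} {k : ℕ} {G : Subgroup (Equiv.Perm Ω)}
    {σ : Equiv.Perm Ω} (h : ∀ x : Ω → Fin k, ∃ τ ∈ G, ∀ i, x (σ i) = x (τ i)) :
    σ ∈ galoisClosure k G := by
  intro f hf x
  obtain ⟨τ, hτ, he⟩ := h x
  rw [hf τ hτ x]
  congr 1
  funext i
  exact (he i).symm

open Equiv Equiv.Perm Nat

/-- `Equiv.permCongr` as a monoid hom. -/
def permCongrHom' {γ δ : Type*} (e : γ ≃ δ) : Equiv.Perm γ →* Equiv.Perm δ where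
  toFun p := e.permCongr p
  map_one' := by ext x; simp
  map_mul' p q := by ext x; simp [Equiv.Perm.mul_apply]

lemma lift_of_support_subset {α : Type*} [Fintype α] [DecidableEq α]
    (S : Finset α) (E : {x // x ∈ S} ≃ Fin 5) (ρ : Equiv.Perm α)
    (hsupp : ∀ x, ρ x ≠ x → x ∈ S) :
    ∃ π : Equiv.Perm (Fin 5),
      (Equiv.Perm.ofSubtype.comp (permCongrHom' E.symm)) π = ρ ∧ π.sign = ρ.sign := by
  have h₁ : ∀ x, x ∈ S ↔ ρ x ∈ S := by
    intro x
    constructor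
    · intro hx
      by_cases h : ρ x = x
      · rwa [h]
      · exact hsupp (ρ x) (fun hh => h (ρ.injective hh))
    · intro hx
      by_cases h : ρ x = x
      · rwa [← h]
      · exact hsupp x h
  replace h₁ : ∀ x, ρ x ∈ S ↔ x ∈ S := fun x => (h₁ x).symm
  refine ⟨E.permCongr (ρ.subtypePerm h₁), ?_, ?_⟩
  · have : E.symm.permCongr (E.permCongr (ρ.subtypePerm h₁)) = ρ.subtypePerm h₁ := by
      ext x; simp
    simp only [MonoidHom.comp_apply, permCongrHom', MonoidHom.coe_mk, OneHom.coe_mk, this]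
    exact Equiv.Perm.ofSubtype_subtypePerm h₁ hsupp
  · rw [Equiv.Perm.sign_permCongr]
    have : ρ = Equiv.Perm.ofSubtype (ρ.subtypePerm h₁) :=
      (Equiv.Perm.ofSubtype_subtypePerm h₁ hsupp).symm
    conv_rhs => rw [this]
    have hs := (Equiv.Perm.sign_ofSubtype (ρ.subtypePerm h₁)).symm
    convert hs using 3 <;> exact Subsingleton.elim _ _


lemma exists_small_support_elt {α : Type*} [Fintype α] [DecidableEq α]
    (h5 : 5 ≤ Fintype.card α) (N : Subgroup (Equiv.Perm α))
    (hnorm : ∀ n ∈ N, ∀ γ ∈ alternatingGroup α, γ * n * γ⁻¹ ∈ N)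
    (σ : Equiv.Perm α) (hσN : σ ∈ N) (hσA : σ ∈ alternatingGroup α) (hσ1 : σ ≠ 1) :
    ∃ τ ∈ N, τ ∈ alternatingGroup α ∧ τ ≠ 1 ∧
      ∃ S₀ : Finset α, S₀.card ≤ 5 ∧ ∀ x, τ x ≠ x → x ∈ S₀ := by
  classical
  obtain ⟨a, ha⟩ : ∃ a, σ a ≠ a := by
    by_contra h
    push_neg at h
    exact hσ1 (Equiv.ext h)
  set b := σ a with hb
  have hba : b ≠ a := ha
  have mk : ∀ γ : Equiv.Perm α, γ ∈ alternatingGroup α →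
      σ * γ * σ⁻¹ * γ⁻¹ ∈ N ∧ σ * γ * σ⁻¹ * γ⁻¹ ∈ alternatingGroup α := by
    intro γ hγ
    constructor
    · have h1 : γ * σ⁻¹ * γ⁻¹ ∈ N := hnorm σ⁻¹ (inv_mem hσN) γ hγ
      have := mul_mem hσN h1
      simpa [mul_assoc] using this
    · have h1 : σ * γ * σ⁻¹ ∈ alternatingGroup α :=
        Subgroup.Normal.conj_mem inferInstance γ hγ σ
      exact mul_mem h1 (inv_mem hγ)
  have hswapA : ∀ (u v w : α), v ≠ u → w ≠ u → w ≠ v →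
      Equiv.swap u v * Equiv.swap u w ∈ alternatingGroup α := by
    intro u v w h1 h2 h3
    rw [Equiv.Perm.mem_alternatingGroup, map_mul, Equiv.Perm.sign_swap h1.symm,
      Equiv.Perm.sign_swap h2.symm]
    decide
  by_cases hcase : σ b = a
  · -- σ swaps a and b
    obtain ⟨c, hca, hcb, hcm⟩ : ∃ c, c ≠ a ∧ c ≠ b ∧ σ c ≠ c := by
      by_contra h
      push_neg at h
      have hσswap : σ = Equiv.swap a b := by
        ext x
        by_cases hxa : x = a
        · subst hxa; rw [Equiv.swap_apply_left]
        · by_cases hxb : x = b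
          · subst hxb; rw [Equiv.swap_apply_right]; exact hcase
          · rw [Equiv.swap_apply_of_ne_of_ne hxa hxb]; exact h x hxa hxb
      rw [Equiv.Perm.mem_alternatingGroup, hσswap, Equiv.Perm.sign_swap (Ne.symm hba)] at hσA
      exact absurd hσA (by decide)
    set d := σ c with hd
    have hdc : d ≠ c := hcm
    have hda : d ≠ a := fun h => hcb (σ.injective (h.trans hcase.symm))
    have hdb : d ≠ b := fun h => hca (σ.injective (h.trans hb))
    set γ := Equiv.swap a c * Equiv.swap a d with hγ
    have hγA : γ ∈ alternatingGroup α := hswapA a c d hca hda hdc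
    have hγa : γ a = d := by
      rw [hγ, Equiv.Perm.mul_apply, Equiv.swap_apply_left,
        Equiv.swap_apply_of_ne_of_ne hda hdc]
    have hγfix : ∀ x, x ≠ a → x ≠ c → x ≠ d → γ x = x := by
      intro x h1 h2 h3
      rw [hγ, Equiv.Perm.mul_apply, Equiv.swap_apply_of_ne_of_ne h1 h3,
        Equiv.swap_apply_of_ne_of_ne h1 h2]
    refine ⟨σ * γ * σ⁻¹ * γ⁻¹, (mk γ hγA).1, (mk γ hγA).2, ?_, {a, b, c, d, σ d}, ?_, ?_⟩
    · intro h1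
      have h2 : σ * γ * σ⁻¹ = γ := by
        have := mul_eq_one_iff_eq_inv.mp h1
        simpa using this
      have h3 : (σ * γ * σ⁻¹) b = γ b := by rw [h2]
      have hσinvb : σ⁻¹ b = a := by rw [hb]; exact σ.symm_apply_apply a
      rw [Equiv.Perm.mul_apply, Equiv.Perm.mul_apply, hσinvb, hγa,
        hγfix b hba (Ne.symm hcb) (Ne.symm hdb)] at h3
      exact hda (σ.injective (h3.trans hb))
    · have h1 := Finset.card_insert_le a ({b, c, d, σ d} : Finset α)
      have h2 := Finset.card_insert_le b ({c, d, σ d} : Finset α)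
      have h3 := Finset.card_insert_le c ({d, σ d} : Finset α)
      have h4 := Finset.card_insert_le d ({σ d} : Finset α)
      simp only [Finset.card_singleton] at h4
      omega
    · intro x hx
      by_contra hxS
      simp only [Finset.mem_insert, Finset.mem_singleton, not_or] at hxS
      obtain ⟨h1, h2, h3, h4, h5'⟩ := hxS
      apply hx
      have hγinvx : γ⁻¹ x = x := by
        exact γ.injective (by rw [(by exact γ.apply_symm_apply x : γ (γ⁻¹ x) = x), hγfix x h1 h3 h4])
      have hσinvx : γ (σ⁻¹ x) = σ⁻¹ x := by
        apply hγfix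
        · intro h; apply h2; rw [hb, ← h]; exact (σ.apply_symm_apply x).symm
        · intro h; apply h4; rw [hd, ← h]; exact (σ.apply_symm_apply x).symm
        · intro h; apply h5'; rw [← h]; exact (σ.apply_symm_apply x).symm
      rw [Equiv.Perm.mul_apply, Equiv.Perm.mul_apply, Equiv.Perm.mul_apply, hγinvx, hσinvx]
      exact σ.apply_symm_apply x
  · -- σ b ≠ a
    obtain ⟨c, hca, hcb, hcs⟩ : ∃ c, c ≠ a ∧ c ≠ b ∧ c ≠ σ⁻¹ a := by
      by_contra h
      push_neg at h
      have hsub : (Finset.univ : Finset α) ⊆ {a, b, σ⁻¹ a} := by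
        intro x _
        simp only [Finset.mem_insert, Finset.mem_singleton]
        by_cases h1 : x = a
        · exact Or.inl h1
        · by_cases h2 : x = b
          · exact Or.inr (Or.inl h2)
          · exact Or.inr (Or.inr (h x h1 h2))
      have hcard := Finset.card_le_card hsub
      rw [Finset.card_univ] at hcard
      have h1 := Finset.card_insert_le a ({b, σ⁻¹ a} : Finset α)
      have h2 := Finset.card_insert_le b ({σ⁻¹ a} : Finset α)
      simp only [Finset.card_singleton] at h2
      omega
    set γ := Equiv.swap a b * Equiv.swap a c with hγ
    have hγA : γ ∈ alternatingGroup α := hswapA a b c hba hca hcb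
    have hγa : γ a = c := by
      rw [hγ, Equiv.Perm.mul_apply, Equiv.swap_apply_left,
        Equiv.swap_apply_of_ne_of_ne hca hcb]
    have hγfix : ∀ x, x ≠ a → x ≠ b → x ≠ c → γ x = x := by
      intro x h1 h2 h3
      rw [hγ, Equiv.Perm.mul_apply, Equiv.swap_apply_of_ne_of_ne h1 h3,
        Equiv.swap_apply_of_ne_of_ne h1 h2]
    refine ⟨σ * γ * σ⁻¹ * γ⁻¹, (mk γ hγA).1, (mk γ hγA).2, ?_, {a, b, c, σ b, σ c}, ?_, ?_⟩
    · intro h1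
      have h2 : σ * γ * σ⁻¹ = γ := by
        have := mul_eq_one_iff_eq_inv.mp h1
        simpa using this
      have h3 : (σ * γ * σ⁻¹) a = γ a := by rw [h2]
      have hσia : γ (σ⁻¹ a) = σ⁻¹ a := by
        apply hγfix
        · intro h; exact ha ((congrArg σ h).symm.trans (σ.apply_symm_apply a))
        · intro h; apply hcase; rw [← h]; exact σ.apply_symm_apply a
        · exact fun h => hcs h.symm
      rw [Equiv.Perm.mul_apply, Equiv.Perm.mul_apply, hσia, (by exact σ.apply_symm_apply a : σ (σ⁻¹ a) = a), hγa] at h3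
      exact hca h3.symm
    · have h1 := Finset.card_insert_le a ({b, c, σ b, σ c} : Finset α)
      have h2 := Finset.card_insert_le b ({c, σ b, σ c} : Finset α)
      have h3 := Finset.card_insert_le c ({σ b, σ c} : Finset α)
      have h4 := Finset.card_insert_le (σ b) ({σ c} : Finset α)
      simp only [Finset.card_singleton] at h4
      omega
    · intro x hx
      by_contra hxS
      simp only [Finset.mem_insert, Finset.mem_singleton, not_or] at hxS
      obtain ⟨h1, h2, h3, h4, h5'⟩ := hxS
      apply hx
      have hγinvx : γ⁻¹ x = x := by
        exact γ.injective (by rw [(by exact γ.apply_symm_apply x : γ (γ⁻¹ x) = x), hγfix x h1 h2 h3])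
      have hσinvx : γ (σ⁻¹ x) = σ⁻¹ x := by
        apply hγfix
        · intro h; apply h2; rw [hb, ← h]; exact (σ.apply_symm_apply x).symm
        · intro h; apply h4; rw [← h]; exact (σ.apply_symm_apply x).symm
        · intro h; apply h5'; rw [← h]; exact (σ.apply_symm_apply x).symm
      rw [Equiv.Perm.mul_apply, Equiv.Perm.mul_apply, Equiv.Perm.mul_apply, hγinvx, hσinvx]
      exact σ.apply_symm_apply x

lemma alt_le_of_normalized {α : Type*} [Fintype α] [DecidableEq α]
    (h5 : 5 ≤ Fintype.card α) (N : Subgroup (Equiv.Perm α))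
    (hnorm : ∀ n ∈ N, ∀ γ ∈ alternatingGroup α, γ * n * γ⁻¹ ∈ N)
    (σ : Equiv.Perm α) (hσN : σ ∈ N) (hσA : σ ∈ alternatingGroup α) (hσ1 : σ ≠ 1) :
    alternatingGroup α ≤ N := by
  classical
  obtain ⟨τ, hτN, hτA, hτ1, S₀, hS₀card, hτsupp⟩ :=
    exists_small_support_elt h5 N hnorm σ hσN hσA hσ1
  -- enlarge S₀ to a 5-element set S
  obtain ⟨S, hS₀S, -, hScard⟩ :=
    Finset.exists_subsuperset_card_eq (Finset.subset_univ S₀) hS₀card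
      (by rwa [Finset.card_univ])
  have E : {x // x ∈ S} ≃ Fin 5 := S.equivFinOfCardEq hScard
  set Φ : Equiv.Perm (Fin 5) →* Equiv.Perm α :=
    Equiv.Perm.ofSubtype.comp (permCongrHom' E.symm) with hΦ
  have hΦsign : ∀ π : Equiv.Perm (Fin 5), (Φ π).sign = π.sign := by
    intro π
    rw [hΦ, MonoidHom.comp_apply]
    show (Equiv.Perm.ofSubtype (E.symm.permCongr π)).sign = _
    rw [Equiv.Perm.sign_ofSubtype]
    have := Equiv.Perm.sign_permCongr E.symm π
    convert this using 3 <;> exact Subsingleton.elim _ _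
  -- lift τ
  obtain ⟨π, hπΦ, hπsign⟩ := lift_of_support_subset S E τ (fun x hx => hS₀S (hτsupp x hx))
  have hπA : π ∈ alternatingGroup (Fin 5) := by
    rw [Equiv.Perm.mem_alternatingGroup, hπsign]
    exact Equiv.Perm.mem_alternatingGroup.mp hτA
  have hπ1 : π ≠ 1 := by
    intro h
    rw [h, map_one] at hπΦ
    exact hτ1 hπΦ.symm
  -- the pulled-back subgroup of A₅
  set M : Subgroup (Equiv.Perm (Fin 5)) := N.comap Φ ⊓ alternatingGroup (Fin 5) with hM
  have hMnormal : (M.subgroupOf (alternatingGroup (Fin 5))).Normal := by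
    constructor
    rintro ⟨n, hnA⟩ hn ⟨g, hgA⟩
    rw [Subgroup.mem_subgroupOf] at hn ⊢
    simp only [hM, Subgroup.mem_inf, Subgroup.mem_comap] at hn ⊢
    constructor
    · show Φ (g * n * g⁻¹) ∈ N
      rw [map_mul, map_mul, map_inv]
      refine hnorm (Φ n) hn.1 (Φ g) ?_
      rw [Equiv.Perm.mem_alternatingGroup, hΦsign]
      exact Equiv.Perm.mem_alternatingGroup.mp hgA
    · exact mul_mem (mul_mem hgA hn.2) (inv_mem hgA)
  have hMmem : (⟨π, hπA⟩ : alternatingGroup (Fin 5)) ∈ M.subgroupOf (alternatingGroup (Fin 5)) := by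
    rw [Subgroup.mem_subgroupOf]
    simp only [hM, Subgroup.mem_inf, Subgroup.mem_comap]
    exact ⟨by rw [hπΦ]; exact hτN, hπA⟩
  have hMtop : M.subgroupOf (alternatingGroup (Fin 5)) = ⊤ := by
    rcases IsSimpleGroup.eq_bot_or_eq_top_of_normal _ hMnormal with h | h
    · rw [h, Subgroup.mem_bot] at hMmem
      exact absurd (congrArg Subtype.val hMmem) hπ1
    · exact h
  have hA5M : alternatingGroup (Fin 5) ≤ M := Subgroup.subgroupOf_eq_top.mp hMtop
  -- produce a three-cycle in N
  set u : α := ((E.symm 0 : {x // x ∈ S}) : α) with hu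
  set v : α := ((E.symm 1 : {x // x ∈ S}) : α) with hv
  set w : α := ((E.symm 2 : {x // x ∈ S}) : α) with hw
  have hES : ∀ i : Fin 5, ((E.symm i : {x // x ∈ S}) : α) ∈ S := fun i => (E.symm i).2
  have hinj : ∀ i j : Fin 5, i ≠ j → ((E.symm i : {x // x ∈ S}) : α) ≠ (E.symm j : {x // x ∈ S}) :=
    fun i j hij h => hij (E.symm.injective (Subtype.ext h))
  have huv : u ≠ v := hinj 0 1 (by decide)
  have huw : u ≠ w := hinj 0 2 (by decide)
  have hvw : v ≠ w := hinj 1 2 (by decide)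
  set t : Equiv.Perm α := Equiv.swap u v * Equiv.swap u w with ht
  have ht3 : t.IsThreeCycle := Equiv.Perm.isThreeCycle_swap_mul_swap_same huv huw hvw
  have htsupp : ∀ x, t x ≠ x → x ∈ S := by
    intro x hx
    by_contra hxS
    apply hx
    have hxu : x ≠ u := fun h => hxS (h ▸ hES 0)
    have hxv : x ≠ v := fun h => hxS (h ▸ hES 1)
    have hxw : x ≠ w := fun h => hxS (h ▸ hES 2)
    rw [ht, Equiv.Perm.mul_apply, Equiv.swap_apply_of_ne_of_ne hxu hxw,
      Equiv.swap_apply_of_ne_of_ne hxu hxv]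
  obtain ⟨ρ, hρΦ, hρsign⟩ := lift_of_support_subset S E t htsupp
  have hρA : ρ ∈ alternatingGroup (Fin 5) := by
    rw [Equiv.Perm.mem_alternatingGroup, hρsign]
    exact ht3.sign
  have htN : t ∈ N := by
    have := hA5M hρA
    rw [hM, Subgroup.mem_inf, Subgroup.mem_comap, hρΦ] at this
    exact this.1
  -- normal closure argument
  have hNsub : (N.subgroupOf (alternatingGroup α)).Normal := by
    constructor
    rintro ⟨n, hnA⟩ hn ⟨g, hgA⟩
    rw [Subgroup.mem_subgroupOf] at hn ⊢
    exact hnorm n hn g hgA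
  have htmem : (⟨t, ht3.mem_alternatingGroup⟩ : alternatingGroup α)
      ∈ N.subgroupOf (alternatingGroup α) := by
    rw [Subgroup.mem_subgroupOf]; exact htN
  have := ht3.alternating_normalClosure (by rwa [Nat.card_eq_fintype_card])
  have hle : Subgroup.normalClosure ({⟨t, ht3.mem_alternatingGroup⟩} : Set (alternatingGroup α))
      ≤ N.subgroupOf (alternatingGroup α) :=
    Subgroup.normalClosure_le_normal (Set.singleton_subset_iff.mpr htmem)
  rw [this] at hle
  exact Subgroup.subgroupOf_eq_top.mp (top_le_iff.mp hle)

lemma pair_one_mem {α β : Type*} [Fintype α] [DecidableEq α] [Fintype β]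
    (h4 : 4 < Fintype.card α) (hβα : Fintype.card β < Fintype.card α)
    (G : Subgroup (Equiv.Perm α × Equiv.Perm β))
    (hfst : G.map (MonoidHom.fst (Equiv.Perm α) (Equiv.Perm β)) = alternatingGroup α ∨
      G.map (MonoidHom.fst (Equiv.Perm α) (Equiv.Perm β)) = ⊤) :
    ∀ g ∈ alternatingGroup α, (g, (1 : Equiv.Perm β)) ∈ G := by
  classical
  haveI : Nontrivial α := Fintype.one_lt_card_iff_nontrivial.mp (by omega)
  have h5 : 5 ≤ Fintype.card α := h4
  have hAle : alternatingGroup α ≤ G.map (MonoidHom.fst (Equiv.Perm α) (Equiv.Perm β)) := by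
    rcases hfst with h | h
    · rw [h]
    · rw [h]; exact le_top
  set N : Subgroup (Equiv.Perm α) := G.comap (MonoidHom.inl (Equiv.Perm α) (Equiv.Perm β))
    with hN
  have hNmem : ∀ g : Equiv.Perm α, g ∈ N ↔ (g, (1 : Equiv.Perm β)) ∈ G := by
    intro g; rw [hN, Subgroup.mem_comap]; rfl
  have hnorm : ∀ n ∈ N, ∀ γ ∈ alternatingGroup α, γ * n * γ⁻¹ ∈ N := by
    intro n hn γ hγ
    obtain ⟨⟨p, q⟩, hpq, hp⟩ := hAle hγ
    simp only [MonoidHom.coe_fst] at hp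
    subst hp
    rw [hNmem] at hn ⊢
    have hmem := mul_mem (mul_mem hpq hn) (inv_mem hpq)
    have heq : ((p, q) * (n, 1) * (p, q)⁻¹ : Equiv.Perm α × Equiv.Perm β)
        = (p * n * p⁻¹, 1) := by
      simp [Prod.ext_iff]
    rwa [heq] at hmem
  have hexists : ∃ σ : Equiv.Perm α, σ ∈ N ∧ σ ∈ alternatingGroup α ∧ σ ≠ 1 := by
    by_contra hcon
    push_neg at hcon
    have hchoice : ∀ g : alternatingGroup α, ∃ q : Equiv.Perm β, ((g : Equiv.Perm α), q) ∈ G := by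
      intro g
      obtain ⟨⟨p, q⟩, hpq, hp⟩ := hAle g.2
      simp only [MonoidHom.coe_fst] at hp
      exact ⟨q, by rwa [hp] at hpq⟩
    choose f hf using hchoice
    have hinj : Function.Injective f := by
      intro g g' he
      have hm := mul_mem (hf g) (inv_mem (hf g'))
      rw [he] at hm
      have hm2 : (((g : Equiv.Perm α) * (g' : Equiv.Perm α)⁻¹, (1 : Equiv.Perm β)))
          ∈ G := by
        have heq : (((g : Equiv.Perm α), f g') * ((g' : Equiv.Perm α), f g')⁻¹
            : Equiv.Perm α × Equiv.Perm β)
            = ((g : Equiv.Perm α) * (g' : Equiv.Perm α)⁻¹, 1) := by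
          simp [Prod.ext_iff]
        rwa [heq] at hm
      have h1 : (g : Equiv.Perm α) * (g' : Equiv.Perm α)⁻¹ = 1 :=
        hcon _ ((hNmem _).mpr hm2) (mul_mem g.2 (inv_mem g'.2))
      exact Subtype.ext (mul_inv_eq_one.mp h1)
    have hcard := Fintype.card_le_of_injective f hinj
    rw [Fintype.card_perm] at hcard
    have h2 : 2 * Fintype.card (alternatingGroup α) = (Fintype.card α)! := by
      rw [two_mul_card_alternatingGroup, Fintype.card_perm]
    obtain ⟨m, hm⟩ : ∃ m, Fintype.card α = m + 1 :=
      ⟨Fintype.card α - 1, by omega⟩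
    have hfle : (Fintype.card β)! ≤ m ! := Nat.factorial_le (by omega)
    rw [hm, Nat.factorial_succ] at h2
    have hpos := Nat.factorial_pos m
    have hkey : (m + 1) * m ! ≤ 2 * m ! := by omega
    have := Nat.le_of_mul_le_mul_right hkey hpos
    omega
  obtain ⟨σ, hσN, hσA, hσ1⟩ := hexists
  intro g hg
  rw [← hNmem]
  exact alt_le_of_normalized h5 N hnorm σ hσN hσA hσ1 hg

/-- The Galois closure over `k = |α| + |β| - d` of (the image in `S_{α⊕β}` of) a subdirect
product `G ≤ S_α × S_β` with `π₁(G) ∈ {A_α, S_α}` and `π₂(G) = L` is `S_α × L`. -/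
theorem stmt_9 {α β : Type*} [Fintype α] [DecidableEq α] [Fintype β]
    (d : ℕ) (hd : 1 ≤ d) (hβ : Fintype.card β < d)
    (hα : max (Fintype.card β) 4 < Fintype.card α)
    (k : ℕ) (hk : k = Fintype.card α + Fintype.card β - d) (hdk : d ≤ k) (hk2 : 2 ≤ k)
    (L : Subgroup (Equiv.Perm β)) (G : Subgroup (Equiv.Perm α × Equiv.Perm β))
    (hL : G.map (MonoidHom.snd (Equiv.Perm α) (Equiv.Perm β)) = L)
    (hfst : G.map (MonoidHom.fst (Equiv.Perm α) (Equiv.Perm β)) = alternatingGroup α ∨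
      G.map (MonoidHom.fst (Equiv.Perm α) (Equiv.Perm β)) = ⊤) :
    galoisClosure k (G.map (Equiv.Perm.sumCongrHom α β)) =
      {σ : Equiv.Perm (α ⊕ β) | ∃ g : Equiv.Perm α, ∃ h ∈ L, σ = Equiv.sumCongr g h} := by
  classical
  have hba : Fintype.card β < Fintype.card α := lt_of_le_of_lt (le_max_left _ _) hα
  have h4 : 4 < Fintype.card α := lt_of_le_of_lt (le_max_right _ _) hα
  have hka : k < Fintype.card α := by omega
  have hbk : Fintype.card β < k := by omega
  have hNA := pair_one_mem h4 hba G hfst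
  ext σ
  simp only [Set.mem_setOf_eq]
  constructor
  · -- closure ⊆ S_α × L
    intro hσ
    set emb : β ≃ Fin (Fintype.card β) := Fintype.equivFin β with hemb
    set x₁ : α ⊕ β → Fin k :=
      Sum.elim (fun _ => (⟨0, by omega⟩ : Fin k))
        (fun j => (⟨(emb j : ℕ) + 1, by have := (emb j).2; omega⟩ : Fin k)) with hx₁
    obtain ⟨τ, hτ, he⟩ := orbit_of_mem_closure hk2 hσ x₁
    rw [Subgroup.mem_map] at hτ
    obtain ⟨⟨g', h'⟩, hG', rfl⟩ := hτ
    have he' : ∀ i, x₁ (σ i) = x₁ (Equiv.sumCongr g' h' i) := he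
    -- σ sends inr j to inr (h' j)
    have hr : ∀ j : β, σ (Sum.inr j) = Sum.inr (h' j) := by
      intro j
      have h1 := he' (Sum.inr j)
      cases hσj : σ (Sum.inr j) with
      | inl i =>
        rw [hσj] at h1
        simp only [hx₁, Equiv.sumCongr_apply, Sum.map_inr, Sum.elim_inl, Sum.elim_inr] at h1
        exact absurd (congrArg Fin.val h1) (by simp)
      | inr j' =>
        rw [hσj] at h1
        simp only [hx₁, Equiv.sumCongr_apply, Sum.map_inr, Sum.elim_inr, Fin.mk.injEq] at h1
        have : (emb j' : ℕ) = (emb (h' j) : ℕ) := by omega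
        rw [emb.injective (Fin.val_injective this)]
    -- σ sends inl into inl
    have hl : ∀ i : α, ∃ i', σ (Sum.inl i) = Sum.inl i' := by
      intro i
      have h1 := he' (Sum.inl i)
      cases hσi : σ (Sum.inl i) with
      | inl i' => exact ⟨i', rfl⟩
      | inr j' =>
        rw [hσi] at h1
        simp only [hx₁, Equiv.sumCongr_apply, Sum.map_inl, Sum.elim_inl, Sum.elim_inr] at h1
        exact absurd (congrArg Fin.val h1) (by simp)
    have hl' : ∀ i : α, ∃ i', σ⁻¹ (Sum.inl i) = Sum.inl i' := by
      intro i
      cases hσi : σ⁻¹ (Sum.inl i) with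
      | inl i' => exact ⟨i', rfl⟩
      | inr j =>
        exfalso
        have h1 : σ (σ⁻¹ (Sum.inl i)) = Sum.inl i := σ.apply_symm_apply _
        rw [hσi, hr j] at h1
        exact Sum.inr_ne_inl h1
    set gf : α → α := fun i => Classical.choose (hl i) with hgf
    set gb : α → α := fun i => Classical.choose (hl' i) with hgb
    have hgfs : ∀ i, σ (Sum.inl i) = Sum.inl (gf i) := fun i => Classical.choose_spec (hl i)
    have hgbs : ∀ i, σ⁻¹ (Sum.inl i) = Sum.inl (gb i) := fun i => Classical.choose_spec (hl' i)
    have hglf : Function.LeftInverse gb gf := by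
      intro i
      have h1 : σ⁻¹ (σ (Sum.inl i)) = Sum.inl i := σ.symm_apply_apply _
      rw [hgfs i, hgbs (gf i)] at h1
      exact Sum.inl.inj h1
    have hgrf : Function.RightInverse gb gf := by
      intro i
      have h1 : σ (σ⁻¹ (Sum.inl i)) = Sum.inl i := σ.apply_symm_apply _
      rw [hgbs i, hgfs (gb i)] at h1
      exact Sum.inl.inj h1
    refine ⟨⟨gf, gb, hglf, hgrf⟩, h', ?_, ?_⟩
    · rw [← hL, Subgroup.mem_map]
      exact ⟨(g', h'), hG', rfl⟩
    · ext i
      cases i with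
      | inl i => simp only [Equiv.sumCongr_apply, Sum.map_inl]; exact hgfs i
      | inr j => simp only [Equiv.sumCongr_apply, Sum.map_inr]; exact hr j
  · -- S_α × L ⊆ closure
    rintro ⟨g, h, hhL, rfl⟩
    apply mem_closure_of_orbit
    intro x
    rw [← hL, Subgroup.mem_map] at hhL
    obtain ⟨⟨g₀, h₀⟩, hG₀, hsnd⟩ := hhL
    have hsnd' : h₀ = h := hsnd
    rw [hsnd'] at hG₀
    obtain ⟨i₁, i₂, hne, heq⟩ :=
      Fintype.exists_ne_map_eq_of_card_lt (fun i : α => x (Sum.inl i)) (by simpa using hka)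
    have build : ∀ g₁ : Equiv.Perm α, g₁ * g₀⁻¹ ∈ alternatingGroup α → (g₁, h) ∈ G := by
      intro g₁ hg₁
      have hmem := mul_mem (hNA _ hg₁) hG₀
      have heq2 : ((g₁ * g₀⁻¹, (1 : Equiv.Perm β)) * (g₀, h)
          : Equiv.Perm α × Equiv.Perm β) = (g₁, h) := by
        simp [Prod.ext_iff, mul_assoc]
      rwa [heq2] at hmem
    by_cases hsg : g * g₀⁻¹ ∈ alternatingGroup α
    · refine ⟨Equiv.sumCongr g h, Subgroup.mem_map.mpr ⟨(g, h), build g hsg, rfl⟩,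
        fun i => rfl⟩
    · have hsign : Equiv.Perm.sign (g * g₀⁻¹) = -1 := by
        rcases Int.units_eq_one_or (Equiv.Perm.sign (g * g₀⁻¹)) with h1 | h1
        · exact absurd (Equiv.Perm.mem_alternatingGroup.mpr h1) hsg
        · exact h1
      have hsg2 : Equiv.swap i₁ i₂ * g * g₀⁻¹ ∈ alternatingGroup α := by
        rw [Equiv.Perm.mem_alternatingGroup, mul_assoc, map_mul,
          Equiv.Perm.sign_swap hne, hsign]
        decide
      refine ⟨Equiv.sumCongr (Equiv.swap i₁ i₂ * g) h,
        Subgroup.mem_map.mpr ⟨(Equiv.swap i₁ i₂ * g, h), build _ hsg2, rfl⟩, fun i => ?_⟩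
      cases i with
      | inr j => rfl
      | inl i =>
        show x (Sum.inl (g i)) = x (Sum.inl (Equiv.swap i₁ i₂ (g i)))
        by_cases h1 : g i = i₁
        · rw [h1, Equiv.swap_apply_left]; exact heq
        · by_cases h2 : g i = i₂
          · rw [h2, Equiv.swap_apply_right]; exact heq.symm
          · rw [Equiv.swap_apply_of_ne_of_ne h1 h2]
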